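/- Suppose the Bellman operator H of a finite Markov decision process with |R(s,a)| ≤ 1 for all (s,a) is a span-seminorm contraction with factor β ∈ (0,1), and suppose Q* : S×A → ℝ and r* ∈ ℝ satisfy H(Q*) − Q* = r*·e. Then p_span(Q*) ≤ 1/(1 − β). -/

import Mathlib

/-- The span seminorm of a vector over a finite nonempty index set:
`p_span(x) = (max_i x_i - min_i x_i) / 2`. -/
noncomputable def pspan {I : Type*} [Fintype I] [Nonempty I] (x : I → ℝ) : ℝ :=
  ((⨆ i, x i) - ⨅ i, x i) / 2

/-- The Bellman operator of a finite MDP: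
`[H(Q)](s,a) = R(s,a) + Σ_{s'} p(s'|s,a) · max_{a'} Q(s',a')`. -/
noncomputable def bellman {S A : Type*} [Fintype S] [Nonempty A]
    (p : S × A → S → ℝ) (R : S × A → ℝ) (Q : S × A → ℝ) : S × A → ℝ :=
  fun sa => R sa + ∑ s' : S, p sa s' * ⨆ a' : A, Q (s', a')

lemma pspan_add_le {I : Type*} [Fintype I] [Nonempty I] (f g : I → ℝ) :
    pspan (fun i => f i + g i) ≤ pspan f + pspan g := by
  have hsup : (⨆ i, f i + g i) ≤ (⨆ i, f i) + ⨆ i, g i :=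
    ciSup_le fun i => add_le_add (le_ciSup (Set.Finite.bddAbove (Set.finite_range f)) i)
      (le_ciSup (Set.Finite.bddAbove (Set.finite_range g)) i)
  have hinf : (⨅ i, f i) + (⨅ i, g i) ≤ ⨅ i, f i + g i :=
    le_ciInf fun i => add_le_add (ciInf_le (Set.Finite.bddBelow (Set.finite_range f)) i)
      (ciInf_le (Set.Finite.bddBelow (Set.finite_range g)) i)
  unfold pspan
  linarith

lemma pspan_add_const {I : Type*} [Fintype I] [Nonempty I] (f : I → ℝ) (c : ℝ) :
    pspan (fun i => f i + c) = pspan f := by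
  have h1 : (⨆ i, f i + c) = (⨆ i, f i) + c :=
    (ciSup_add (Set.Finite.bddAbove (Set.finite_range f)) c).symm
  have h2 : (⨅ i, f i + c) = (⨅ i, f i) + c :=
    (ciInf_add (Set.Finite.bddBelow (Set.finite_range f)) c).symm
  unfold pspan
  simp only [h1, h2]
  ring

/-- If `|R| ≤ 1`, `H` is a span-seminorm `β`-contraction with `β ∈ (0,1)`, and
`H(Q*) - Q* = r* e`, then `p_span(Q*) ≤ 1/(1 - β)`. -/
theorem span_Qstar_bound {S A : Type*} [Fintype S] [Fintype A] [Nonempty S] [Nonempty A]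
    (p : S × A → S → ℝ) (R : S × A → ℝ)
    (hp : ∀ sa s', 0 ≤ p sa s') (hp1 : ∀ sa, ∑ s' : S, p sa s' = 1)
    (hR : ∀ sa, |R sa| ≤ 1)
    (β : ℝ) (hβ0 : 0 < β) (hβ1 : β < 1)
    (hcontr : ∀ Q1 Q2 : S × A → ℝ,
      pspan (bellman p R Q1 - bellman p R Q2) ≤ β * pspan (Q1 - Q2))
    (Qstar : S × A → ℝ) (rstar : ℝ)
    (hfix : ∀ sa, bellman p R Qstar sa - Qstar sa = rstar) :
    pspan Qstar ≤ 1 / (1 - β) := by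
  have hb0 : bellman p R (0 : S × A → ℝ) = R := by
    funext sa
    simp [bellman, ciSup_const]
  have hQ : Qstar = fun sa => bellman p R Qstar sa + (-rstar) := by
    funext sa
    have := hfix sa
    linarith
  have h1 : pspan Qstar = pspan (bellman p R Qstar) := by
    conv_lhs => rw [hQ]
    exact pspan_add_const _ _
  have h2 : pspan (bellman p R Qstar) ≤
      pspan (bellman p R Qstar - bellman p R 0) + pspan R := by
    have := pspan_add_le (fun sa => bellman p R Qstar sa - bellman p R (0 : S × A → ℝ) sa) R
    simp only [hb0] at this ⊢
    convert this using 2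
    funext sa
    simp [Pi.sub_apply]
    rfl
  have h3 : pspan (bellman p R Qstar - bellman p R 0) ≤ β * pspan Qstar := by
    have := hcontr Qstar 0
    simpa using this
  have hRspan : pspan R ≤ 1 := by
    have hsup : (⨆ sa, R sa) ≤ 1 := ciSup_le fun sa => (abs_le.mp (hR sa)).2
    have hinf : (-1 : ℝ) ≤ ⨅ sa, R sa := le_ciInf fun sa => (abs_le.mp (hR sa)).1
    unfold pspan; linarith
  have key : pspan Qstar ≤ β * pspan Qstar + 1 := by
    calc pspan Qstar = pspan (bellman p R Qstar) := h1
      _ ≤ pspan (bellman p R Qstar - bellman p R 0) + pspan R := h2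
      _ ≤ β * pspan Qstar + 1 := add_le_add h3 hRspan
  rw [le_div_iff₀ (by linarith : (0:ℝ) < 1 - β)]
  nlinarith
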